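/- Deterministic ergodic gap bound for dual averaging: run X_k = Q(Y_k), Y_{k+1} = Y_k + γ_k v(X_k) with ‖v(x)‖* ≤ V for all x. If X* is globally variationally stable with gap function ε(x) = inf_{x*∈X*} ⟨v(x), x* − x⟩ ≥ 0, then (Σ_{k=1}^n γ_k ε(X_k)) / (Σ_{k=1}^n γ_k) ≤ (F(X*, Y_1) + (V²/(2K)) Σ_{k=1}^n γ_k²) / (Σ_{k=1}^n γ_k), where F(X*, y) = inf_{x*∈X*} F(x*, y). -/

import Mathlib

set_option maxHeartbeats 1000000 in
/-- Deterministic ergodic gap bound for dual averaging. If `X*` is globally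
variationally stable with gap function `ε(x) = inf_{x*∈X*} ⟨v(x), x* − x⟩` and `‖v‖ ≤ V` on
`X`, then along `X_k = Q(Y_k)`, `Y_{k+1} = Y_k + γ_k v(X_k)`,
`(Σ_{k=1}^n γ_k ε(X_k)) / (Σ_{k=1}^n γ_k) ≤ (F(X*,Y_1) + (V²/(2K)) Σ_{k=1}^n γ_k²) / (Σ_{k=1}^n γ_k)`. -/
theorem stmt17
    {E : Type*} [NormedAddCommGroup E] [InnerProductSpace ℝ E] [FiniteDimensional ℝ E]
    (X : Set E) (hXc : IsCompact X) (hXconv : Convex ℝ X) (hXne : X.Nonempty)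
    (h : E → ℝ) (hcont : ContinuousOn h X)
    (K : ℝ) (hK : 0 < K)
    (hsc : ∀ x ∈ X, ∀ x' ∈ X, ∀ t ∈ Set.Icc (0 : ℝ) 1,
      h (t • x + (1 - t) • x') ≤ t * h x + (1 - t) * h x' - K / 2 * t * (1 - t) * ‖x' - x‖ ^ 2)
    (Q : E → E)
    (hQ : ∀ y : E, Q y ∈ X ∧ ∀ x ∈ X, (inner ℝ y x : ℝ) - h x ≤ (inner ℝ y (Q y) : ℝ) - h (Q y))
    (v : E → E) (hv : ContinuousOn v X)
    (V : ℝ) (hV : ∀ x ∈ X, ‖v x‖ ≤ V)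
    (Xs : Set E) (hXscl : IsClosed Xs) (hXsne : Xs.Nonempty) (hXsX : Xs ⊆ X)
    -- global variational stability:
    (hVS : ∀ x ∈ X, ∀ p ∈ Xs, (inner ℝ (v x) (x - p) : ℝ) ≤ 0)
    (γ : ℕ → ℝ) (hγ : ∀ n, 0 < γ n)
    (Y : ℕ → E) (hrec : ∀ n : ℕ, Y (n + 1) = Y n + γ n • v (Q (Y n))) :
    ∀ n : ℕ,
      (∑ k ∈ Finset.Icc 1 n, γ k * sInf ((fun p => (inner ℝ (v (Q (Y k))) (p - Q (Y k)) : ℝ)) '' Xs))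
          / (∑ k ∈ Finset.Icc 1 n, γ k) ≤
        (sInf ((fun p => h p + ((inner ℝ (Y 1) (Q (Y 1)) : ℝ) - h (Q (Y 1)))
            - (inner ℝ (Y 1) p : ℝ)) '' Xs)
          + V ^ 2 / (2 * K) * ∑ k ∈ Finset.Icc 1 n, γ k ^ 2)
          / (∑ k ∈ Finset.Icc 1 n, γ k) := by
  -- notation
  set F : E → E → ℝ := fun p y => h p + ((inner ℝ y (Q y) : ℝ) - h (Q y)) - (inner ℝ y p : ℝ)
    with hF
  obtain ⟨x0, hx0⟩ := hXne
  have hV0 : 0 ≤ V := le_trans (norm_nonneg _) (hV x0 hx0)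
  -- F is nonnegative on X
  have hFnn : ∀ p ∈ X, ∀ y : E, 0 ≤ F p y := by
    intro p hp y
    have := (hQ y).2 p hp
    simp only [hF]
    linarith
  -- strong optimality of Q y
  have key : ∀ y : E, ∀ x' ∈ X,
      (inner ℝ y (x' - Q y) : ℝ) - h x' + h (Q y) ≤ -(K / 2 * ‖x' - Q y‖ ^ 2) := by
    intro y x' hx'
    set x := Q y with hx
    have hxX : x ∈ X := (hQ y).1
    set r := ‖x' - x‖ ^ 2 with hr
    have hr0 : 0 ≤ r := by positivity
    set D : ℝ := (inner ℝ y (x' - x) : ℝ) - h x' + h x with hD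
    have hstep : ∀ t : ℝ, 0 < t → t ≤ 1 → K / 2 * (1 - t) * r ≤ -D := by
      intro t ht0 ht1
      have hxt : t • x' + (1 - t) • x ∈ X :=
        hXconv hx' hxX (le_of_lt ht0) (by linarith) (by ring)
      have hA := (hQ y).2 _ hxt
      have hB := hsc x' hx' x hxX t ⟨le_of_lt ht0, ht1⟩
      have hC : (inner ℝ y (t • x' + (1 - t) • x) : ℝ)
          = t * (inner ℝ y x' : ℝ) + (1 - t) * (inner ℝ y x : ℝ) := by
        rw [inner_add_right, real_inner_smul_right, real_inner_smul_right]
      have hC2 : (inner ℝ y (x' - x) : ℝ) = (inner ℝ y x' : ℝ) - (inner ℝ y x : ℝ) :=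
        inner_sub_right _ _ _
      have hnr : ‖x - x'‖ ^ 2 = r := by rw [hr, norm_sub_rev]
      rw [hnr] at hB
      rw [← hx] at hA
      nlinarith [hA, hB, ht0]
    -- take t → 0⁺
    have hD1 : 0 ≤ -D := by have := hstep 1 one_pos le_rfl; simpa using this
    have tend : Filter.Tendsto (fun t : ℝ => K / 2 * (1 - t) * r)
        (nhdsWithin 0 (Set.Ioi 0)) (nhds (K / 2 * r)) := by
      have hc : Continuous fun t : ℝ => K / 2 * (1 - t) * r := by continuity
      have := (hc.tendsto 0).mono_left (nhdsWithin_le_nhds (s := Set.Ioi (0:ℝ)))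
      simpa using this
    have hlim : K / 2 * r ≤ -D := by
      refine le_of_tendsto tend ?_
      refine Filter.eventually_of_mem self_mem_nhdsWithin (fun t ht => ?_)
      rcases le_or_gt t 1 with h1 | h1
      · exact hstep t ht h1
      · nlinarith [mul_nonneg (mul_nonneg hK.le (by linarith : (0:ℝ) ≤ t - 1)) hr0, hD1]
    linarith
  -- smoothness of the conjugate
  have smooth : ∀ y w : E,
      (inner ℝ (y + w) (Q (y + w)) : ℝ) - h (Q (y + w)) ≤
        ((inner ℝ y (Q y) : ℝ) - h (Q y)) + (inner ℝ w (Q y) : ℝ) + ‖w‖ ^ 2 / (2 * K) := by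
    intro y w
    set x := Q y with hx
    set x' := Q (y + w) with hx'
    have hx'X : x' ∈ X := (hQ (y + w)).1
    have hkey := key y x' hx'X
    rw [← hx] at hkey
    set d := ‖x' - x‖ with hd
    have hd0 : 0 ≤ d := norm_nonneg _
    have hCS : (inner ℝ w (x' - x) : ℝ) ≤ ‖w‖ * d := by
      calc (inner ℝ w (x' - x) : ℝ) ≤ ‖w‖ * ‖x' - x‖ := real_inner_le_norm _ _
        _ = ‖w‖ * d := rfl
    have he1 : (inner ℝ (y + w) x' : ℝ) = (inner ℝ y x' : ℝ) + (inner ℝ w x' : ℝ) :=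
      inner_add_left _ _ _
    have he2 : (inner ℝ y (x' - x) : ℝ) = (inner ℝ y x' : ℝ) - (inner ℝ y x : ℝ) :=
      inner_sub_right _ _ _
    have he3 : (inner ℝ w (x' - x) : ℝ) = (inner ℝ w x' : ℝ) - (inner ℝ w x : ℝ) :=
      inner_sub_right _ _ _
    have hw0 : 0 ≤ ‖w‖ := norm_nonneg _
    have hsq : 0 ≤ (‖w‖ - K * d) ^ 2 := sq_nonneg _
    rw [he1]
    rw [he2] at hkey
    have hfin : ‖w‖ * d - K / 2 * d ^ 2 ≤ ‖w‖ ^ 2 / (2 * K) := by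
      rw [le_div_iff₀ (by positivity : (0:ℝ) < 2 * K)]
      nlinarith [hsq]
    nlinarith [hkey, hCS, he3, hfin]
  -- per-step bound
  have step : ∀ p ∈ Xs, ∀ k : ℕ,
      F p (Y (k + 1)) ≤ F p (Y k)
        + γ k * (inner ℝ (v (Q (Y k))) (Q (Y k) - p) : ℝ) + γ k ^ 2 * V ^ 2 / (2 * K) := by
    intro p hp k
    have hpX : p ∈ X := hXsX hp
    set w := γ k • v (Q (Y k)) with hw
    have hsm := smooth (Y k) w
    have hwn : ‖w‖ ^ 2 ≤ γ k ^ 2 * V ^ 2 := by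
      have : ‖w‖ = γ k * ‖v (Q (Y k))‖ := by
        rw [hw, norm_smul, Real.norm_eq_abs, abs_of_pos (hγ k)]
      rw [this, mul_pow]
      have hvb := hV _ (hQ (Y k)).1
      have h1 : ‖v (Q (Y k))‖ ^ 2 ≤ V ^ 2 := by
        nlinarith [norm_nonneg (v (Q (Y k)))]
      exact mul_le_mul_of_nonneg_left h1 (sq_nonneg _)
    have hwx : (inner ℝ w (Q (Y k)) : ℝ) = γ k * (inner ℝ (v (Q (Y k))) (Q (Y k)) : ℝ) :=
      real_inner_smul_left _ _ _
    have hwp : (inner ℝ w p : ℝ) = γ k * (inner ℝ (v (Q (Y k))) p : ℝ) :=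
      real_inner_smul_left _ _ _
    have hyadd : (inner ℝ (Y k + w) p : ℝ) = (inner ℝ (Y k) p : ℝ) + (inner ℝ w p : ℝ) :=
      inner_add_left _ _ _
    have hisub : (inner ℝ (v (Q (Y k))) (Q (Y k) - p) : ℝ)
        = (inner ℝ (v (Q (Y k))) (Q (Y k)) : ℝ) - (inner ℝ (v (Q (Y k))) p : ℝ) :=
      inner_sub_right _ _ _
    have hrw : Y (k + 1) = Y k + w := hrec k
    have h2K : (0:ℝ) < 2 * K := by positivity
    have hnorm : ‖w‖ ^ 2 / (2 * K) ≤ γ k ^ 2 * V ^ 2 / (2 * K) :=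
      (div_le_div_iff_of_pos_right h2K).mpr hwn
    have hisub' : γ k * (inner ℝ (v (Q (Y k))) (Q (Y k) - p) : ℝ)
        = γ k * (inner ℝ (v (Q (Y k))) (Q (Y k)) : ℝ) - γ k * (inner ℝ (v (Q (Y k))) p : ℝ) := by
      rw [hisub]; ring
    simp only [hF, hrw]
    linarith [hsm, hwx, hwp, hyadd, hisub', hnorm]
  -- telescoped bound
  have tele : ∀ p ∈ Xs, ∀ n : ℕ,
      F p (Y (n + 1)) ≤ F p (Y 1)
        + ∑ k ∈ Finset.Icc 1 n,
            (γ k * (inner ℝ (v (Q (Y k))) (Q (Y k) - p) : ℝ) + γ k ^ 2 * V ^ 2 / (2 * K)) := by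
    intro p hp n
    induction n with
    | zero => simp
    | succ m ih =>
      rw [Finset.sum_Icc_succ_top (by omega : 1 ≤ m + 1)]
      have := step p hp (m + 1)
      linarith
  -- main numerator bound
  intro n
  have hdenom : 0 ≤ ∑ k ∈ Finset.Icc 1 n, γ k :=
    Finset.sum_nonneg fun k _ => (hγ k).le
  have hXsc : IsCompact Xs := hXc.of_isClosed_subset hXscl hXsX
  have num : (∑ k ∈ Finset.Icc 1 n, γ k *
        sInf ((fun p => (inner ℝ (v (Q (Y k))) (p - Q (Y k)) : ℝ)) '' Xs))
      ≤ sInf ((fun p => h p + ((inner ℝ (Y 1) (Q (Y 1)) : ℝ) - h (Q (Y 1)))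
            - (inner ℝ (Y 1) p : ℝ)) '' Xs)
          + V ^ 2 / (2 * K) * ∑ k ∈ Finset.Icc 1 n, γ k ^ 2 := by
    rw [← sub_le_iff_le_add]
    apply le_csInf (hXsne.image _)
    rintro b ⟨p, hp, rfl⟩
    rw [sub_le_iff_le_add]
    have hbnd : ∀ k : ℕ, γ k *
        sInf ((fun p => (inner ℝ (v (Q (Y k))) (p - Q (Y k)) : ℝ)) '' Xs)
        ≤ γ k * (inner ℝ (v (Q (Y k))) (p - Q (Y k)) : ℝ) := by
      intro k
      have hcontf : Continuous fun q : E => (inner ℝ (v (Q (Y k))) (q - Q (Y k)) : ℝ) :=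
        continuous_const.inner (continuous_id.sub continuous_const)
      have hbb : BddBelow ((fun q => (inner ℝ (v (Q (Y k))) (q - Q (Y k)) : ℝ)) '' Xs) :=
        (hXsc.image hcontf).bddBelow
      exact mul_le_mul_of_nonneg_left (csInf_le hbb ⟨p, hp, rfl⟩) (hγ k).le
    have hsum1 : (∑ k ∈ Finset.Icc 1 n, γ k *
          sInf ((fun p => (inner ℝ (v (Q (Y k))) (p - Q (Y k)) : ℝ)) '' Xs))
        ≤ ∑ k ∈ Finset.Icc 1 n, γ k * (inner ℝ (v (Q (Y k))) (p - Q (Y k)) : ℝ) :=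
      Finset.sum_le_sum fun k _ => hbnd k
    have hflip : ∀ k : ℕ, γ k * (inner ℝ (v (Q (Y k))) (p - Q (Y k)) : ℝ)
        = -(γ k * (inner ℝ (v (Q (Y k))) (Q (Y k) - p) : ℝ)) := by
      intro k
      have : (inner ℝ (v (Q (Y k))) (p - Q (Y k)) : ℝ)
          = -(inner ℝ (v (Q (Y k))) (Q (Y k) - p) : ℝ) := by
        rw [← inner_neg_right]; congr 1; abel
      rw [this]; ring
    have htel := tele p hp n
    have hfn : 0 ≤ F p (Y (n + 1)) := hFnn p (hXsX hp) _
    have hsplit : (∑ k ∈ Finset.Icc 1 n,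
          (γ k * (inner ℝ (v (Q (Y k))) (Q (Y k) - p) : ℝ) + γ k ^ 2 * V ^ 2 / (2 * K)))
        = (∑ k ∈ Finset.Icc 1 n, γ k * (inner ℝ (v (Q (Y k))) (Q (Y k) - p) : ℝ))
          + V ^ 2 / (2 * K) * ∑ k ∈ Finset.Icc 1 n, γ k ^ 2 := by
      rw [Finset.sum_add_distrib, Finset.mul_sum]
      congr 1
      exact Finset.sum_congr rfl fun k _ => by ring
    have hFp : F p (Y 1) = h p + ((inner ℝ (Y 1) (Q (Y 1)) : ℝ) - h (Q (Y 1)))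
        - (inner ℝ (Y 1) p : ℝ) := rfl
    have hsum2 : (∑ k ∈ Finset.Icc 1 n, γ k * (inner ℝ (v (Q (Y k))) (p - Q (Y k)) : ℝ))
        = -(∑ k ∈ Finset.Icc 1 n, γ k * (inner ℝ (v (Q (Y k))) (Q (Y k) - p) : ℝ)) := by
      rw [← Finset.sum_neg_distrib]
      exact Finset.sum_congr rfl fun k _ => hflip k
    rw [hsplit] at htel
    have final : (∑ k ∈ Finset.Icc 1 n, γ k *
          sInf ((fun p => (inner ℝ (v (Q (Y k))) (p - Q (Y k)) : ℝ)) '' Xs))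
        ≤ F p (Y 1) + V ^ 2 / (2 * K) * ∑ k ∈ Finset.Icc 1 n, γ k ^ 2 := by
      have h1 : -(∑ k ∈ Finset.Icc 1 n, γ k * (inner ℝ (v (Q (Y k))) (Q (Y k) - p) : ℝ))
          ≤ F p (Y 1) + V ^ 2 / (2 * K) * ∑ k ∈ Finset.Icc 1 n, γ k ^ 2 := by
        have h2 := le_trans hfn htel
        linarith [h2]
      exact (hsum1.trans_eq hsum2).trans h1
    exact final
  rcases eq_or_lt_of_le hdenom with hz | hz
  · rw [← hz]; simp
  · exact (div_le_div_iff_of_pos_right hz).mpr num
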